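/- Under the setup of the Arnoldi cross iteration ACI(s) (A ∈ ℝ^{n×n}, 1 ≤ s < d(A), unit vector v₀ with d(A,v₀) ≥ s+1), the iterates satisfy (1/2)‖v_{k+1} − v_k‖² = 1 − ‖w̃_k‖/‖ṽ_{k+1}‖ for every k ≥ 0, and consequently ‖v_{k+1} − v_k‖ → 0 and ‖w_{k+1} − w_k‖ → 0 as k → ∞. -/

import Mathlib

open Polynomial Filter Topology Matrix

noncomputable section

def mulv {ι : Type*} [Fintype ι] (A : Matrix ι ι ℝ) (v : EuclideanSpace ℝ ι) :
    EuclideanSpace ℝ ι :=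
  (WithLp.equiv 2 (ι → ℝ)).symm (A.mulVec ((WithLp.equiv 2 (ι → ℝ)) v))

def Krylov {ι : Type*} [Fintype ι] [DecidableEq ι] (A : Matrix ι ι ℝ) (s : ℕ) (v : EuclideanSpace ℝ ι) :
    Submodule ℝ (EuclideanSpace ℝ ι) :=
  Submodule.span ℝ (Set.range fun i : Fin s => mulv (A ^ (i : ℕ)) v)

def IsArnoldiProj {ι : Type*} [Fintype ι] [DecidableEq ι] (A : Matrix ι ι ℝ) (s : ℕ)
    (v w : EuclideanSpace ℝ ι) : Prop :=
  w - mulv (A ^ s) v ∈ Krylov A s v ∧ ∀ u ∈ Krylov A s v, inner ℝ w u = (0 : ℝ)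

def vgrade {ι : Type*} [Fintype ι] [DecidableEq ι] (A : Matrix ι ι ℝ)
    (v : EuclideanSpace ℝ ι) : ℕ :=
  sInf {d | ∃ p : ℝ[X], p ≠ 0 ∧ p.natDegree = d ∧ mulv (aeval A p) v = 0}

def dmin {ι : Type*} [Fintype ι] [DecidableEq ι] (A : Matrix ι ι ℝ) : ℕ :=
  (minpoly ℝ A).natDegree

def Phi {ι : Type*} [Fintype ι] [DecidableEq ι] (A : Matrix ι ι ℝ) (s : ℕ) : ℝ :=
  sSup {r | ∃ v : EuclideanSpace ℝ ι, ‖v‖ = 1 ∧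
    r = sInf {t | ∃ q : ℝ[X], q.Monic ∧ q.natDegree = s ∧ t = ‖mulv (aeval A q) v‖}}

def opNorm {ι : Type*} [Fintype ι] [DecidableEq ι] (A : Matrix ι ι ℝ) : ℝ :=
  ‖Matrix.toEuclideanCLM (𝕜 := ℝ) A‖

def ACI {ι : Type*} [Fintype ι] [DecidableEq ι] (A : Matrix ι ι ℝ) (s : ℕ)
    (v wt w vt : ℕ → EuclideanSpace ℝ ι) : Prop :=
  (∀ k, IsArnoldiProj A s (v k) (wt k)) ∧
  (∀ k, w k = ‖wt k‖⁻¹ • wt k) ∧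
  (∀ k, IsArnoldiProj Aᵀ s (w k) (vt (k + 1))) ∧
  (∀ k, v (k + 1) = ‖vt (k + 1)‖⁻¹ • vt (k + 1))

variable {n : ℕ}

lemma inner_mulv (A : Matrix (Fin n) (Fin n) ℝ) (x y : EuclideanSpace ℝ (Fin n)) :
    (inner ℝ (mulv Aᵀ x) y : ℝ) = inner ℝ x (mulv A y) := by
  simp only [mulv, EuclideanSpace.inner_eq_star_dotProduct, Equiv.apply_symm_apply,
    star_trivial, Matrix.mulVec_transpose, Matrix.dotProduct_mulVec]
  simp only [WithLp.equiv_symm_apply, WithLp.equiv_apply, WithLp.ofLp_toLp]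
  rw [dotProduct_comm (A *ᵥ _), dotProduct_mulVec, dotProduct_comm]

lemma krylov_perp_symm (A : Matrix (Fin n) (Fin n) ℝ) (s : ℕ) (p x : EuclideanSpace ℝ (Fin n))
    (hx : ∀ u ∈ Krylov A s p, inner ℝ x u = (0:ℝ)) :
    ∀ u ∈ Krylov Aᵀ s x, (inner ℝ u p : ℝ) = 0 := by
  intro u hu
  induction hu using Submodule.span_induction with
  | mem y hy =>
      obtain ⟨i, rfl⟩ := hy
      show (inner ℝ (mulv (Aᵀ ^ (i:ℕ)) x) p : ℝ) = 0
      rw [← Matrix.transpose_pow, inner_mulv]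
      exact hx _ (Submodule.subset_span ⟨i, rfl⟩)
  | zero => simp
  | add y z _ _ hy hz => rw [inner_add_left, hy, hz, add_zero]
  | smul c y _ hy => rw [real_inner_smul_left, hy, mul_zero]

lemma cross_inner (A : Matrix (Fin n) (Fin n) ℝ) (s : ℕ)
    (p wtv wv vtv : EuclideanSpace ℝ (Fin n))
    (hwt : IsArnoldiProj A s p wtv)
    (hw : ∀ u ∈ Krylov A s p, inner ℝ wv u = (0:ℝ))
    (hvt : IsArnoldiProj Aᵀ s wv vtv) :
    (inner ℝ vtv p : ℝ) = inner ℝ wv wtv := by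
  have h1 : (inner ℝ (vtv - mulv (Aᵀ ^ s) wv) p : ℝ) = 0 :=
    krylov_perp_symm A s p wv hw _ hvt.1
  have h2 : (inner ℝ (mulv (Aᵀ ^ s) wv) p : ℝ) = inner ℝ wv (mulv (A ^ s) p) := by
    rw [← Matrix.transpose_pow, inner_mulv]
  have h3 : (inner ℝ wv (wtv - mulv (A ^ s) p) : ℝ) = 0 := hw _ hwt.1
  have e1 := inner_sub_left (𝕜 := ℝ) vtv (mulv (Aᵀ ^ s) wv) p
  have e2 := inner_sub_right (𝕜 := ℝ) wv wtv (mulv (A ^ s) p)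
  rw [h1] at e1
  rw [h3] at e2
  linarith

lemma mulv_eq_clm (A : Matrix (Fin n) (Fin n) ℝ) (x : EuclideanSpace ℝ (Fin n)) :
    mulv A x = Matrix.toEuclideanCLM (𝕜 := ℝ) A x := by
  apply (WithLp.equiv 2 ((Fin n) → ℝ)).injective
  rw [WithLp.equiv_apply, WithLp.equiv_apply, Matrix.ofLp_toEuclideanCLM]
  simp [mulv]

lemma norm_mulv_le (A : Matrix (Fin n) (Fin n) ℝ) (x : EuclideanSpace ℝ (Fin n)) :
    ‖mulv A x‖ ≤ ‖Matrix.toEuclideanCLM (𝕜 := ℝ) A‖ * ‖x‖ := by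
  rw [mulv_eq_clm]; exact (Matrix.toEuclideanCLM (𝕜 := ℝ) A).le_opNorm x

def mulvL (v : EuclideanSpace ℝ (Fin n)) :
    Matrix (Fin n) (Fin n) ℝ →ₗ[ℝ] EuclideanSpace ℝ (Fin n) where
  toFun M := mulv M v
  map_add' M N := by simp [mulv, Matrix.add_mulVec, WithLp.toLp_add]
  map_smul' c M := by simp [mulv, Matrix.smul_mulVec, WithLp.toLp_smul]

lemma wt_ne_zero_of_grade (A : Matrix (Fin n) (Fin n) ℝ) (s : ℕ) (hs1 : 1 ≤ s)
    (v0 wt0 : EuclideanSpace ℝ (Fin n))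
    (hwt : IsArnoldiProj A s v0 wt0) (hg : s + 1 ≤ vgrade A v0) : wt0 ≠ 0 := by
  intro h0
  have hmem : mulv (A ^ s) v0 ∈ Krylov A s v0 := by
    have h := hwt.1
    rw [h0, zero_sub] at h
    simpa using neg_mem h
  rw [Krylov, Submodule.mem_span_range_iff_exists_fun] at hmem
  obtain ⟨c, hc⟩ := hmem
  set q : ℝ[X] := ∑ i : Fin s, C (c i) * X ^ (i : ℕ) with hq
  have hqdeg : q.natDegree < s := by
    have : q.natDegree ≤ s - 1 := by
      apply natDegree_sum_le_of_forall_le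
      intro i _
      exact le_trans (natDegree_C_mul_le _ _) (by rw [natDegree_X_pow]; omega)
    omega
  set p : ℝ[X] := X ^ s - q with hp
  have hpdeg : p.natDegree = s := by
    rw [hp, natDegree_sub_eq_left_of_natDegree_lt (by rwa [natDegree_X_pow]), natDegree_X_pow]
  have hp0 : p ≠ 0 := by
    intro h
    rw [h, natDegree_zero] at hpdeg
    omega
  have heval : mulv (aeval A p) v0 = 0 := by
    have h1 : aeval A p = A ^ s - ∑ i : Fin s, c i • A ^ (i : ℕ) := by
      rw [hp, map_sub, aeval_X_pow, hq, map_sum]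
      congr 1
      refine Finset.sum_congr rfl fun i _ => ?_
      rw [_root_.map_mul, aeval_C, aeval_X_pow, ← Algebra.smul_def]
    have h2 : mulv (aeval A p) v0 = mulvL v0 (aeval A p) := rfl
    rw [h2, h1, map_sub, map_sum]
    simp only [LinearMap.map_smul]
    have h3 : ∀ M : Matrix (Fin n) (Fin n) ℝ, mulvL v0 M = mulv M v0 := fun _ => rfl
    simp only [h3, hc]
    exact sub_self _
  have : vgrade A v0 ≤ s := Nat.sInf_le ⟨p, hp0, hpdeg, heval⟩
  omega

lemma norm_wt_le (A : Matrix (Fin n) (Fin n) ℝ) (s : ℕ) (v w : EuclideanSpace ℝ (Fin n))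
    (h : IsArnoldiProj A s v w) :
    ‖w‖ ≤ ‖Matrix.toEuclideanCLM (𝕜 := ℝ) (A ^ s)‖ * ‖v‖ := by
  rcases eq_or_ne w 0 with rfl | hw
  · rw [norm_zero]; positivity
  · have h1 : (inner ℝ w (w - mulv (A ^ s) v) : ℝ) = 0 := h.2 _ h.1
    rw [inner_sub_right] at h1
    have h2 : ‖w‖ * ‖w‖ = (inner ℝ w (mulv (A ^ s) v) : ℝ) := by
      rw [← real_inner_self_eq_norm_mul_norm]; linarith
    have h3 : (inner ℝ w (mulv (A ^ s) v) : ℝ) ≤ ‖w‖ * ‖mulv (A ^ s) v‖ := real_inner_le_norm _ _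
    have h4 := norm_mulv_le (A ^ s) v
    have h5 : (0:ℝ) < ‖w‖ := norm_pos_iff.mpr hw
    nlinarith

lemma normed_inner (x : EuclideanSpace ℝ (Fin n)) (hx : 0 < ‖x‖) :
    (inner ℝ (‖x‖⁻¹ • x) x : ℝ) = ‖x‖ := by
  rw [real_inner_smul_left, real_inner_self_eq_norm_mul_norm]
  field_simp


lemma tendsto_norm_of_ident (x : ℕ → EuclideanSpace ℝ (Fin n)) (r : ℕ → ℝ)
    (hid : ∀ k, (1/2:ℝ) * ‖x k‖ ^ 2 = 1 - r k)
    (hr : Tendsto r atTop (𝓝 1)) : Tendsto (fun k => ‖x k‖) atTop (𝓝 0) := by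
  have hsq : Tendsto (fun k => 2 * (1 - r k)) atTop (𝓝 (0:ℝ)) := by
    have h := (tendsto_const_nhds (x := (1:ℝ)) (f := atTop)).sub hr
    have h2 := h.const_mul 2
    simpa using h2
  have hcomp := (Real.continuous_sqrt.tendsto 0).comp hsq
  rw [Real.sqrt_zero] at hcomp
  refine hcomp.congr fun k => ?_
  show Real.sqrt (2 * (1 - r k)) = ‖x k‖
  have hx : ‖x k‖ ^ 2 = 2 * (1 - r k) := by have := hid k; linarith
  rw [← hx, Real.sqrt_sq (norm_nonneg _)]

theorem aci_consecutive_tendsto_zero {n : ℕ} (A : Matrix (Fin n) (Fin n) ℝ) (s : ℕ)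
    (hs1 : 1 ≤ s) (hs2 : s < dmin A)
    (v wt w vt : ℕ → EuclideanSpace ℝ (Fin n))
    (hv0 : ‖v 0‖ = 1) (hg : s + 1 ≤ vgrade A (v 0))
    (haci : ACI A s v wt w vt) :
    (∀ k, (1 / 2 : ℝ) * ‖v (k + 1) - v k‖ ^ 2 = 1 - ‖wt k‖ / ‖vt (k + 1)‖) ∧
    Tendsto (fun k => ‖v (k + 1) - v k‖) atTop (𝓝 0) ∧
    Tendsto (fun k => ‖w (k + 1) - w k‖) atTop (𝓝 0) := by
  obtain ⟨h1, h2, h3, h4⟩ := haci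
  -- cross identities
  have crossA : ∀ k, (inner ℝ (vt (k+1)) (v k) : ℝ) = inner ℝ (w k) (wt k) := fun k =>
    cross_inner A s (v k) (wt k) (w k) (vt (k+1)) (h1 k)
      (fun u hu => by rw [h2 k, real_inner_smul_left, (h1 k).2 u hu, mul_zero]) (h3 k)
  have crossB : ∀ k, (inner ℝ (wt (k+1)) (w k) : ℝ) = inner ℝ (v (k+1)) (vt (k+1)) := by
    intro k
    have hwt1 : IsArnoldiProj Aᵀᵀ s (v (k+1)) (wt (k+1)) := by
      rw [Matrix.transpose_transpose]; exact h1 (k+1)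
    exact cross_inner Aᵀ s (w k) (vt (k+1)) (v (k+1)) (wt (k+1)) (h3 k)
      (fun u hu => by rw [h4 k, real_inner_smul_left, (h3 k).2 u hu, mul_zero]) hwt1
  -- basic positivity / norms by induction
  have innerA : ∀ k, 0 < ‖wt k‖ → (inner ℝ (vt (k+1)) (v k) : ℝ) = ‖wt k‖ := by
    intro k hk
    rw [crossA k, h2 k]
    exact normed_inner _ hk
  have key : ∀ k, ‖v k‖ = 1 ∧ 0 < ‖wt k‖ := by
    intro k
    induction k with
    | zero => exact ⟨hv0, norm_pos_iff.mpr (wt_ne_zero_of_grade A s hs1 _ _ (h1 0) hg)⟩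
    | succ k ih =>
      obtain ⟨hvk, hwtk⟩ := ih
      have hA := innerA k hwtk
      have hab : ‖wt k‖ ≤ ‖vt (k+1)‖ := by
        have := real_inner_le_norm (vt (k+1)) (v k)
        rw [hA, hvk, mul_one] at this
        exact this
      have hvtpos : 0 < ‖vt (k+1)‖ := lt_of_lt_of_le hwtk hab
      have hv1 : ‖v (k+1)‖ = 1 := by
        rw [h4 k, norm_smul, norm_inv, norm_norm, inv_mul_cancel₀ (ne_of_gt hvtpos)]
      have hwk1 : ‖w k‖ = 1 := by
        rw [h2 k, norm_smul, norm_inv, norm_norm, inv_mul_cancel₀ (ne_of_gt hwtk)]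
      have hB : (inner ℝ (wt (k+1)) (w k) : ℝ) = ‖vt (k+1)‖ := by
        rw [crossB k, h4 k]
        exact normed_inner _ hvtpos
      have hba : ‖vt (k+1)‖ ≤ ‖wt (k+1)‖ := by
        have := real_inner_le_norm (wt (k+1)) (w k)
        rw [hB, hwk1, mul_one] at this
        exact this
      exact ⟨hv1, lt_of_lt_of_le hvtpos hba⟩
  have hwpos : ∀ k, 0 < ‖wt k‖ := fun k => (key k).2
  have hvnorm : ∀ k, ‖v k‖ = 1 := fun k => (key k).1
  have hab : ∀ k, ‖wt k‖ ≤ ‖vt (k+1)‖ := by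
    intro k
    have := real_inner_le_norm (vt (k+1)) (v k)
    rw [innerA k (hwpos k), hvnorm k, mul_one] at this
    exact this
  have hvtpos : ∀ k, 0 < ‖vt (k+1)‖ := fun k => lt_of_lt_of_le (hwpos k) (hab k)
  have hwnorm : ∀ k, ‖w k‖ = 1 := fun k => by
    rw [h2 k, norm_smul, norm_inv, norm_norm, inv_mul_cancel₀ (ne_of_gt (hwpos k))]
  have innerB : ∀ k, (inner ℝ (wt (k+1)) (w k) : ℝ) = ‖vt (k+1)‖ := by
    intro k
    rw [crossB k, h4 k]
    exact normed_inner _ (hvtpos k)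
  have hba : ∀ k, ‖vt (k+1)‖ ≤ ‖wt (k+1)‖ := by
    intro k
    have := real_inner_le_norm (wt (k+1)) (w k)
    rw [innerB k, hwnorm k, mul_one] at this
    exact this
  -- the identities
  have ident1 : ∀ k, (1 / 2 : ℝ) * ‖v (k + 1) - v k‖ ^ 2 = 1 - ‖wt k‖ / ‖vt (k + 1)‖ := by
    intro k
    have hinner : (inner ℝ (v (k+1)) (v k) : ℝ) = ‖wt k‖ / ‖vt (k+1)‖ := by
      rw [h4 k, real_inner_smul_left, innerA k (hwpos k), div_eq_inv_mul]
    rw [norm_sub_sq_real, hvnorm (k+1), hvnorm k, hinner]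
    ring
  have ident2 : ∀ k, (1 / 2 : ℝ) * ‖w (k + 1) - w k‖ ^ 2 = 1 - ‖vt (k + 1)‖ / ‖wt (k + 1)‖ := by
    intro k
    have hinner : (inner ℝ (w (k+1)) (w k) : ℝ) = ‖vt (k+1)‖ / ‖wt (k+1)‖ := by
      rw [h2 (k+1), real_inner_smul_left, innerB k, div_eq_inv_mul]
    rw [norm_sub_sq_real, hwnorm (k+1), hwnorm k, hinner]
    ring
  -- convergence
  have hbddA : BddAbove (Set.range fun k => ‖wt k‖) := by
    refine ⟨‖Matrix.toEuclideanCLM (𝕜 := ℝ) (A ^ s)‖, ?_⟩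
    rintro x ⟨k, rfl⟩
    have := norm_wt_le A s (v k) (wt k) (h1 k)
    rwa [hvnorm k, mul_one] at this
  have hmono : Monotone fun k => ‖wt k‖ :=
    monotone_nat_of_le_succ fun k => (hab k).trans (hba k)
  set L : ℝ := ⨆ k, ‖wt k‖ with hLdef
  have haL : Tendsto (fun k => ‖wt k‖) atTop (𝓝 L) := tendsto_atTop_ciSup hmono hbddA
  have haL1 : Tendsto (fun k => ‖wt (k+1)‖) atTop (𝓝 L) :=
    haL.comp (tendsto_add_atTop_nat 1)
  have hbL : Tendsto (fun k => ‖vt (k+1)‖) atTop (𝓝 L) :=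
    tendsto_of_tendsto_of_tendsto_of_le_of_le haL haL1 hab hba
  have hLpos : 0 < L := lt_of_lt_of_le (hwpos 0) (le_ciSup hbddA 0)
  have hdiv1 : Tendsto (fun k => ‖wt k‖ / ‖vt (k+1)‖) atTop (𝓝 1) := by
    have h := haL.div hbL (ne_of_gt hLpos)
    simpa [div_self (ne_of_gt hLpos), Pi.div_def] using h
  have hdiv2 : Tendsto (fun k => ‖vt (k+1)‖ / ‖wt (k+1)‖) atTop (𝓝 1) := by
    have h := hbL.div haL1 (ne_of_gt hLpos)
    simpa [div_self (ne_of_gt hLpos), Pi.div_def] using h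
  exact ⟨ident1, tendsto_norm_of_ident (fun k => v (k+1) - v k) _ ident1 hdiv1,
    tendsto_norm_of_ident (fun k => w (k+1) - w k) _ ident2 hdiv2⟩
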